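/- arXiv:2408.00117 — 2 statements merged into one kernel-verified Lean document; each statement's English description precedes it below -/
import Mathlib

section
/- Let P be a real n×d matrix, b ∈ ℝⁿ, and l, u ∈ ℝᵈ with l ≤ u componentwise. Then the axis-aligned hyper-rectangle B = {x ∈ ℝᵈ | l ≤ x ≤ u} is contained in the polytope C = {x ∈ ℝᵈ | Px ≤ b} if and only if for every i = 1,…,n, Σ_{j=1}^{d} (max(P_{ij},0)·u_j − max(−P_{ij},0)·l_j) ≤ b_i. -/
/-- Behroozi's criterion: the axis-aligned hyper-rectangle `{x | l ≤ x ≤ u}` is contained in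
the polytope `{x | P x ≤ b}` iff `∑ j (P i j)⁺ * u j - (P i j)⁻ * l j ≤ b i` for every row `i`. -/
theorem rect_subset_polytope_iff {n d : ℕ} (P : Matrix (Fin n) (Fin d) ℝ) (b : Fin n → ℝ)
    (l u : Fin d → ℝ) (hlu : l ≤ u) :
    {x : Fin d → ℝ | ∀ j, l j ≤ x j ∧ x j ≤ u j} ⊆
        {x : Fin d → ℝ | ∀ i, P.mulVec x i ≤ b i} ↔
      ∀ i, ∑ j, (max (P i j) 0 * u j - max (-(P i j)) 0 * l j) ≤ b i := by
  constructor
  · intro h i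
    set x : Fin d → ℝ := fun j => if 0 ≤ P i j then u j else l j with hx
    have hxB : x ∈ {x : Fin d → ℝ | ∀ j, l j ≤ x j ∧ x j ≤ u j} := by
      intro j
      simp only [hx]
      split
      · exact ⟨hlu j, le_refl _⟩
      · exact ⟨le_refl _, hlu j⟩
    have := h hxB i
    have heq : P.mulVec x i = ∑ j, (max (P i j) 0 * u j - max (-(P i j)) 0 * l j) := by
      unfold Matrix.mulVec dotProduct
      refine Finset.sum_congr rfl fun j _ => ?_
      by_cases hp : 0 ≤ P i j
      · simp [hx, hp, max_eq_left hp, max_eq_right (neg_nonpos.mpr hp)]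
      · push_neg at hp
        simp [hx, not_le.mpr hp, max_eq_right hp.le, max_eq_left (neg_nonneg.mpr hp.le)]
    linarith [heq ▸ this]
  · intro h x hxB i
    refine le_trans ?_ (h i)
    unfold Matrix.mulVec dotProduct
    refine Finset.sum_le_sum fun j _ => ?_
    obtain ⟨h1, h2⟩ := hxB j
    by_cases hp : 0 ≤ P i j
    · rw [max_eq_left hp, max_eq_right (neg_nonpos.mpr hp)]
      nlinarith
    · push_neg at hp
      rw [max_eq_right hp.le, max_eq_left (neg_nonneg.mpr hp.le)]
      nlinarith
end

section
/- Let g : ℤ → ℝ satisfy g(−t) = g(t) for all t ∈ ℤ (symmetry about 0) and be nonincreasing in distance from 0, i.e., for natural numbers a ≤ b one has g(b) ≤ g(a). Fix δ ∈ ℕ and for c ∈ ℤ define the window sum S(c) = Σ_{j=−δ}^{δ} g(c + j) (the unnormalized output of an average pooling patch of odd length 2δ+1 centered at c). Then for all c₁, c₂ ∈ ℤ, if |c₁| ≤ |c₂| then S(c₂) ≤ S(c₁); i.e., pooling patches whose centers are closer to the peak yield larger (or equal) pooled values. -/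
/-- If `g : ℤ → ℝ` is symmetric about `0` and nonincreasing in distance from `0`, then window
sums of odd length `2δ+1` (unnormalized average-pooling outputs) are larger for patches whose
centers are closer to the peak. -/
theorem window_sum_anti (g : ℤ → ℝ) (hsym : ∀ t : ℤ, g (-t) = g t)
    (hmono : ∀ a b : ℕ, a ≤ b → g (b : ℤ) ≤ g (a : ℤ)) (δ : ℕ)
    (c₁ c₂ : ℤ) (h : |c₁| ≤ |c₂|) :
    ∑ j ∈ Finset.Icc (-(δ : ℤ)) (δ : ℤ), g (c₂ + j) ≤
      ∑ j ∈ Finset.Icc (-(δ : ℤ)) (δ : ℤ), g (c₁ + j) := by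
  have gabs : ∀ x : ℤ, g x = g (x.natAbs) := by
    intro x
    rcases Int.natAbs_eq x with h' | h'
    · rw [← h']
    · rw [h', hsym]; simp
  have gmono : ∀ x y : ℤ, x.natAbs ≤ y.natAbs → g y ≤ g x := by
    intro x y hxy
    rw [gabs x, gabs y]
    exact hmono _ _ hxy
  set S : ℤ → ℝ := fun c => ∑ j ∈ Finset.Icc (-(δ : ℤ)) (δ : ℤ), g (c + j) with hS
  have Sneg : ∀ c : ℤ, S (-c) = S c := by
    intro c
    simp only [hS]
    refine Finset.sum_nbij' (fun j => -j) (fun j => -j) ?_ ?_ ?_ ?_ ?_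
    · intro a ha; simp only [Finset.mem_Icc] at ha ⊢; omega
    · intro a ha; simp only [Finset.mem_Icc] at ha ⊢; omega
    · intro a _; simp
    · intro a _; simp
    · intro a _
      have e : -c + a = -(c + -a) := by ring
      rw [e, hsym]
  have key : ∀ c : ℤ, S (c + 1) + g (c - δ) = S c + g (c + δ + 1) := by
    intro c
    have e1 : Finset.Icc (-(δ : ℤ)) ((δ : ℤ) + 1) =
        insert (-(δ : ℤ)) (Finset.Icc (-(δ : ℤ) + 1) ((δ : ℤ) + 1)) := by
      ext x; simp only [Finset.mem_Icc, Finset.mem_insert]; omega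
    have e2 : Finset.Icc (-(δ : ℤ)) ((δ : ℤ) + 1) =
        insert ((δ : ℤ) + 1) (Finset.Icc (-(δ : ℤ)) (δ : ℤ)) := by
      ext x; simp only [Finset.mem_Icc, Finset.mem_insert]; omega
    have shift : S (c + 1) = ∑ k ∈ Finset.Icc (-(δ : ℤ) + 1) ((δ : ℤ) + 1), g (c + k) := by
      simp only [hS]
      rw [← Finset.map_add_right_Icc (-(δ : ℤ)) (δ : ℤ) 1, Finset.sum_map]
      apply Finset.sum_congr rfl
      intro j _
      congr 1
      simp [Int.add_comm, Int.add_assoc, Int.add_left_comm]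
    have h1 : ∑ k ∈ Finset.Icc (-(δ : ℤ)) ((δ : ℤ) + 1), g (c + k)
        = g (c + -(δ : ℤ)) + ∑ k ∈ Finset.Icc (-(δ : ℤ) + 1) ((δ : ℤ) + 1), g (c + k) := by
      rw [e1]; exact Finset.sum_insert (by simp only [Finset.mem_Icc]; omega)
    have h2 : ∑ k ∈ Finset.Icc (-(δ : ℤ)) ((δ : ℤ) + 1), g (c + k)
        = g (c + ((δ : ℤ) + 1)) + S c := by
      rw [e2]; exact Finset.sum_insert (by simp only [Finset.mem_Icc]; omega)
    have e3 : c + -(δ : ℤ) = c - δ := by ring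
    have e4 : c + ((δ : ℤ) + 1) = c + δ + 1 := by ring
    rw [e3] at h1
    rw [e4] at h2
    rw [shift]
    linarith
  have Sstep : ∀ n : ℕ, S (n + 1) ≤ S n := by
    intro n
    have h1 := key (n : ℤ)
    have h2 : g ((n : ℤ) + δ + 1) ≤ g ((n : ℤ) - δ) := by
      apply gmono
      omega
    linarith
  have Santi : ∀ m n : ℕ, m ≤ n → S n ≤ S m := by
    intro m n hmn
    induction n, hmn using Nat.le_induction with
    | base => exact le_refl _
    | succ n hn ih =>
      have : ((n : ℤ) + 1) = ((n + 1 : ℕ) : ℤ) := by push_cast; ring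
      calc S ((n + 1 : ℕ) : ℤ) = S ((n : ℤ) + 1) := by rw [this]
        _ ≤ S n := Sstep n
        _ ≤ S m := ih
  have Sabs : ∀ c : ℤ, S c = S (c.natAbs) := by
    intro c
    rcases Int.natAbs_eq c with h' | h'
    · rw [← h']
    · conv_lhs => rw [h']
      rw [Sneg]
  have hab : c₁.natAbs ≤ c₂.natAbs := by
    rw [Int.abs_eq_natAbs, Int.abs_eq_natAbs] at h
    exact_mod_cast h
  have hfin := Santi c₁.natAbs c₂.natAbs hab
  show S c₂ ≤ S c₁
  rw [Sabs c₁, Sabs c₂]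
  exact hfin
end
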